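/- Let p be a prime and let A be an invertible n×n matrix over the p-adic integers ℤ_p. Then there exists a vector v = (v_1,...,v_n) ∈ ℤ_p^n such that each component v_i is the square of a p-adic unit and every component of the vector A·v lies in the subring ℤ_(p) ⊆ ℤ_p of rational numbers with denominator prime to p. -/

import Mathlib

lemma pow_dvd_sq_unit (p : ℕ) [Fact p.Prime] (x : ℤ_[p])
    (h : (p : ℤ_[p]) ^ 3 ∣ x - 1) : ∃ u : ℤ_[p]ˣ, x = (u : ℤ_[p]) ^ 2 := by
  have hp := (Fact.out : p.Prime)
  set F : Polynomial ℤ_[p] := Polynomial.X ^ 2 - Polynomial.C x with hF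
  have hFe : F.eval 1 = 1 - x := by simp [hF]
  have hFd : F.derivative.eval 1 = 2 := by
    simp [hF, Polynomial.derivative_pow]
  have hnormx : ‖x - 1‖ ≤ (p : ℝ) ^ (-(3:ℤ)) := by
    obtain ⟨c, hc⟩ := h
    rw [hc]
    calc ‖(p : ℤ_[p]) ^ 3 * c‖ ≤ ‖(p : ℤ_[p]) ^ 3‖ * 1 := by
          apply le_trans (norm_mul_le _ _)
          gcongr
          exact c.norm_le_one
      _ = (p : ℝ) ^ (-(3:ℤ)) := by
          rw [mul_one, PadicInt.norm_p_pow]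
          norm_num
  have h2 : (p : ℝ) ^ (-(3:ℤ)) < ‖(2 : ℤ_[p])‖ ^ 2 := by
    rcases eq_or_ne p 2 with hp2 | hp2
    · subst hp2
      have : ‖(2 : ℤ_[2])‖ = 2⁻¹ := by
        simpa using PadicInt.norm_p (p := 2)
      rw [this]
      norm_num
    · have hnd : ¬ ((p : ℤ) ∣ 2) := by
        intro hdvd
        have h1 := Int.le_of_dvd (by norm_num) hdvd
        have h2 := hp.two_le
        have h3 : p = 2 := by omega
        exact hp2 h3
      have : ‖(2 : ℤ_[p])‖ = 1 := by
        have h1 := (PadicInt.norm_int_lt_one_iff_dvd (p := p) 2).not.mpr hnd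
        have h2 : ‖((2:ℤ) : ℤ_[p])‖ ≤ 1 := PadicInt.norm_le_one _
        have h3 : ‖((2:ℤ) : ℤ_[p])‖ = 1 := le_antisymm h2 (not_lt.mp h1)
        simpa using h3
      rw [this, one_pow]
      apply zpow_lt_one_of_neg₀
      · exact_mod_cast hp.one_lt
      · norm_num
  have hnorm : ‖F.eval 1‖ < ‖F.derivative.eval 1‖ ^ 2 := by
    rw [hFe, hFd]
    calc ‖1 - x‖ = ‖x - 1‖ := by rw [← norm_neg]; ring_nf
      _ ≤ (p : ℝ) ^ (-(3:ℤ)) := hnormx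
      _ < ‖(2 : ℤ_[p])‖ ^ 2 := h2
  obtain ⟨z, hz0, hz1, -, -⟩ := hensels_lemma hnorm
  have hzsq : z ^ 2 = x := sub_eq_zero.mp (by simpa [hF] using hz0)
  have hzu : IsUnit z := by
    rw [PadicInt.isUnit_iff]
    have h21 : ‖(2 : ℤ_[p])‖ ≤ 1 := PadicInt.norm_le_one 2
    have hlt : ‖z - 1‖ < 1 := lt_of_lt_of_le (by rwa [Polynomial.coe_aeval_eq_eval, hFd] at hz1) h21
    have hz : z = (z - 1) + 1 := by ring
    rw [hz, PadicInt.norm_add_eq_max_of_ne (by rw [norm_one]; exact ne_of_lt hlt),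
      norm_one, max_eq_right (le_of_lt hlt)]
  obtain ⟨u, hu⟩ := hzu
  exact ⟨u, by rw [hu]; exact hzsq.symm⟩

theorem stmt_2 (p : ℕ) [Fact p.Prime] (n : ℕ) (A : Matrix (Fin n) (Fin n) ℤ_[p])
    (hA : IsUnit A) :
    ∃ v : Fin n → ℤ_[p],
      (∀ i, ∃ u : ℤ_[p]ˣ, v i = (u : ℤ_[p]) ^ 2) ∧
      (∀ i, ∃ a b : ℤ, ¬ (p : ℤ) ∣ b ∧ (b : ℤ_[p]) * A.mulVec v i = (a : ℤ_[p])) := by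
  obtain ⟨U, hU⟩ := hA
  set B : Matrix (Fin n) (Fin n) ℤ_[p] := ↑U⁻¹ with hB
  have hAB : A * B = 1 := by rw [← hU, hB]; exact U.mul_inv
  have hBA : B * A = 1 := by rw [← hU, hB]; exact U.inv_mul
  set c : Fin n → ℤ_[p] := A.mulVec (fun _ => 1) with hc
  set a : Fin n → ℤ_[p] := fun j => ((c j).appr 3 : ℤ_[p]) with ha
  set v : Fin n → ℤ_[p] := B.mulVec a with hv
  have hAv : A.mulVec v = a := by
    rw [hv, Matrix.mulVec_mulVec, hAB, Matrix.one_mulVec]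
  refine ⟨v, ?_, ?_⟩
  · intro i
    apply pow_dvd_sq_unit
    have hone : (fun _ => (1 : ℤ_[p])) = B.mulVec c := by
      rw [hc, Matrix.mulVec_mulVec, hBA, Matrix.one_mulVec]
    have hkey : v i - 1 = B.mulVec (fun j => a j - c j) i := by
      conv_lhs => rw [hv, show (1:ℤ_[p]) = B.mulVec c i from congrFun hone i]
      simp [Matrix.mulVec, dotProduct, mul_sub, Finset.sum_sub_distrib]
    rw [hkey]
    simp only [Matrix.mulVec, dotProduct]
    apply Finset.dvd_sum
    intro j _
    apply Dvd.dvd.mul_left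
    have hs := PadicInt.appr_spec 3 (c j)
    rw [Ideal.mem_span_singleton] at hs
    exact (dvd_sub_comm).mp hs
  · intro i
    refine ⟨((c i).appr 3 : ℤ), 1, ?_, ?_⟩
    · intro hdvd
      have h1 := Int.le_of_dvd one_pos hdvd
      have h2 := (Fact.out : p.Prime).two_le
      omega
    rw [hAv]
    simp [ha]
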